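/- Let γ : [0, T] → ℍ̄ be a curve in the closed upper half-plane parameterized by half-plane capacity, i.e. hcap(γ[0,t]) = 2t, and suppose γ is the graph of x ↦ e^{−1/x} near 0 (so γ(t) lies on {x + i·e^{−1/x} : x ∈ (0,1]} with γ(0⁺) → 0). If there is a universal constant c with 2t = hcap γ[0,t] ≤ c · height(γ[0,t]) · diam(γ[0,t]), then γ is not Hölder continuous of any exponent at t = 0. -/

import Mathlib

theorem stmt_7 (T c : ℝ) (hT : 0 < T) (hc : 0 < c) (γ : ℝ → ℂ) (x : ℝ → ℝ)
    (hx : ∀ t ∈ Set.Ioc (0:ℝ) T, 0 < x t ∧ x t ≤ 1)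
    (hγ : ∀ t ∈ Set.Ioc (0:ℝ) T,
      γ t = (x t : ℂ) + (Real.exp (-1 / x t) : ℝ) * Complex.I)
    (hγ0 : γ 0 = 0)
    (hx0 : Filter.Tendsto x (nhdsWithin 0 (Set.Ioi 0)) (nhds 0))
    (hcap : ∀ t ∈ Set.Ioc (0:ℝ) T, t / 2 ≤ c * Real.exp (-1 / x t) * x t) :
    ¬ ∃ (α C : ℝ), 0 < α ∧ 0 ≤ C ∧
        ∀ t ∈ Set.Icc (0:ℝ) T, ‖γ t - γ 0‖ ≤ C * t ^ α := by
  rintro ⟨α, C, hα, hC0, hH⟩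
  -- x t ≤ C * t ^ α for t ∈ Ioc 0 T
  have hxle : ∀ t ∈ Set.Ioc (0:ℝ) T, x t ≤ C * t ^ α := by
    intro t ht
    have h1 := hH t ⟨le_of_lt ht.1, ht.2⟩
    rw [hγ0, sub_zero, hγ t ht] at h1
    refine le_trans ?_ h1
    have : ((x t : ℂ) + (Real.exp (-1 / x t) : ℝ) * Complex.I).re = x t := by
      simp [Complex.add_re, Complex.mul_re, Complex.I_re, Complex.I_im, -Complex.ofReal_exp]
    calc x t = ((x t : ℂ) + (Real.exp (-1 / x t) : ℝ) * Complex.I).re := this.symm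
      _ ≤ _ := Complex.re_le_norm _
  have hCpos : 0 < C := by
    rcases lt_or_eq_of_le hC0 with h | h
    · exact h
    · exfalso
      have hT' : T ∈ Set.Ioc (0:ℝ) T := ⟨hT, le_refl T⟩
      have := hxle T hT'
      rw [← h, zero_mul] at this
      exact absurd this (not_le.mpr (hx T hT').1)
  -- main inequality: 1/C ≤ t^α * (log c + log 2 - log t)
  have key : ∀ t ∈ Set.Ioc (0:ℝ) T, 1 / C ≤ t ^ α * (Real.log c + Real.log 2 - Real.log t) := by
    intro t ht
    have hxt := hx t ht
    have htpow : 0 < t ^ α := Real.rpow_pos_of_pos ht.1 α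
    have hCt : 0 < C * t ^ α := mul_pos hCpos htpow
    have hexp : Real.exp (-1 / x t) ≤ Real.exp (-1 / (C * t ^ α)) := by
      apply Real.exp_le_exp.mpr
      rw [neg_div, neg_div, neg_le_neg_iff]
      exact one_div_le_one_div_of_le hxt.1 (hxle t ht)
    have h2 : t / 2 ≤ c * Real.exp (-1 / (C * t ^ α)) := by
      calc t / 2 ≤ c * Real.exp (-1 / x t) * x t := hcap t ht
        _ ≤ c * Real.exp (-1 / x t) * 1 := by
            exact mul_le_mul_of_nonneg_left hxt.2
              (mul_nonneg hc.le (Real.exp_pos _).le)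
        _ = c * Real.exp (-1 / x t) := mul_one _
        _ ≤ c * Real.exp (-1 / (C * t ^ α)) := mul_le_mul_of_nonneg_left hexp hc.le
    have hlog : Real.log (t / 2) ≤ Real.log c + (-1 / (C * t ^ α)) := by
      have := Real.log_le_log (div_pos ht.1 two_pos) h2
      rwa [Real.log_mul hc.ne' (Real.exp_pos _).ne', Real.log_exp] at this
    have hlog2 : Real.log (t / 2) = Real.log t - Real.log 2 :=
      Real.log_div ht.1.ne' two_ne_zero
    have h3 : 1 / (C * t ^ α) ≤ Real.log c + Real.log 2 - Real.log t := by
      rw [hlog2, neg_div] at hlog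
      linarith
    have h4 : 1 / (C * t ^ α) * t ^ α = 1 / C := by
      field_simp
    calc 1 / C = 1 / (C * t ^ α) * t ^ α := h4.symm
      _ ≤ (Real.log c + Real.log 2 - Real.log t) * t ^ α :=
          mul_le_mul_of_nonneg_right h3 htpow.le
      _ = t ^ α * (Real.log c + Real.log 2 - Real.log t) := mul_comm _ _
  -- RHS tends to 0 as t → 0+
  have hpow0 : Filter.Tendsto (fun t : ℝ => t ^ α) (nhdsWithin 0 (Set.Ioi 0)) (nhds 0) := by
    have : ContinuousAt (fun t : ℝ => t ^ α) 0 :=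
      Real.continuousAt_rpow_const 0 α (Or.inr hα.le)
    have h2 := this.tendsto.mono_left (nhdsWithin_le_nhds (s := Set.Ioi 0))
    simpa [Real.zero_rpow hα.ne'] using h2
  have hlogpow : Filter.Tendsto (fun t : ℝ => Real.log t * t ^ α)
      (nhdsWithin 0 (Set.Ioi 0)) (nhds 0) := tendsto_log_mul_rpow_nhdsGT_zero hα
  have htend : Filter.Tendsto (fun t : ℝ => t ^ α * (Real.log c + Real.log 2 - Real.log t))
      (nhdsWithin 0 (Set.Ioi 0)) (nhds 0) := by
    have h := (hpow0.const_mul (Real.log c + Real.log 2)).sub hlogpow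
    rw [mul_zero, sub_zero] at h
    refine h.congr fun t => ?_
    ring
  have hev : ∀ᶠ t in nhdsWithin 0 (Set.Ioi 0),
      t ^ α * (Real.log c + Real.log 2 - Real.log t) < 1 / C :=
    htend.eventually_lt_const (by positivity)
  have hmem : ∀ᶠ t in nhdsWithin 0 (Set.Ioi 0), t ∈ Set.Ioc (0:ℝ) T :=
    Ioc_mem_nhdsGT_of_mem ⟨le_refl 0, hT⟩
  obtain ⟨t, h1, h2⟩ := (hev.and hmem).exists
  exact absurd (key t h2) (not_le.mpr h1)
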